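/- For all n ≥ 0, the inverse expansion xⁿ = Σ_{r=0}^{⌊n/2⌋} ((-1)^r n!)/(r!(n-2r)!) · (log(1+λ)/λ)^{r-n} · y^r · H_{n-2r}(x,y|λ) holds. -/

import Mathlib

open Real Finset MeasureTheory

noncomputable def dH (l x y : ℝ) (n : ℕ) : ℝ :=
  ∑ k ∈ Finset.range (n / 2 + 1),
    (Nat.factorial n : ℝ) / ((Nat.factorial (n - 2 * k) : ℝ) * (Nat.factorial k : ℝ)) *
      (Real.log (1 + l) / l) ^ (n - k) * x ^ (n - 2 * k) * y ^ k

/-- Triangle sum reindexing. -/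
lemma tri_sum (N : ℕ) (f : ℕ → ℕ → ℝ) :
    (∑ m ∈ Finset.range (N + 1), ∑ r ∈ Finset.range (m + 1), f r (m - r))
      = ∑ r ∈ Finset.range (N + 1), ∑ k ∈ Finset.range (N - r + 1), f r k := by
  have h1 : ∀ m ∈ Finset.range (N + 1),
      (∑ r ∈ Finset.range (m + 1), f r (m - r))
        = ∑ r ∈ Finset.range (N + 1), if r ≤ m then f r (m - r) else 0 := by
    intro m hm
    rw [Finset.sum_ite, Finset.sum_const_zero, add_zero]
    apply Finset.sum_congr
    · ext r
      simp only [Finset.mem_range, Finset.mem_filter]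
      simp only [Finset.mem_range] at hm
      omega
    · intro r _; rfl
  rw [Finset.sum_congr rfl h1, Finset.sum_comm]
  apply Finset.sum_congr rfl
  intro r hr
  simp only [Finset.mem_range] at hr
  rw [Finset.sum_ite, Finset.sum_const_zero, add_zero]
  have hfil : (Finset.range (N + 1)).filter (fun m => r ≤ m) = Finset.Ico r (N + 1) := by
    ext m; simp only [Finset.mem_filter, Finset.mem_range, Finset.mem_Ico]; omega
  rw [hfil, Finset.sum_Ico_eq_sum_range]
  have hN : N + 1 - r = N - r + 1 := by omega
  rw [hN]
  apply Finset.sum_congr rfl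
  intro k _
  congr 1
  omega

lemma alt_sum_choose_real (m : ℕ) :
    (∑ r ∈ Finset.range (m + 1), (-1 : ℝ) ^ r * (m.choose r : ℝ))
      = if m = 0 then 1 else 0 := by
  have h := Int.alternating_sum_range_choose (n := m)
  rcases Nat.eq_zero_or_pos m with hm | hm
  · subst hm; simp
  · rw [if_neg hm.ne'] at h
    rw [if_neg hm.ne']
    have h2 : ((∑ i ∈ Finset.range (m + 1), (-1 : ℤ) ^ i * (m.choose i : ℤ) : ℤ) : ℝ)
        = ((0 : ℤ) : ℝ) := by rw [h]
    push_cast at h2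
    exact h2

theorem stmt6 (l : ℝ) (hl : 0 < l) (n : ℕ) (x y : ℝ) :
    x ^ n =
      ∑ r ∈ Finset.range (n / 2 + 1),
        ((-1 : ℝ) ^ r * (Nat.factorial n : ℝ)) /
            ((Nat.factorial r : ℝ) * (Nat.factorial (n - 2 * r) : ℝ)) *
          (Real.log (1 + l) / l) ^ ((r : ℤ) - (n : ℤ)) * y ^ r * dH l x y (n - 2 * r) := by
  set c : ℝ := Real.log (1 + l) / l with hc
  have hcpos : 0 < c := div_pos (Real.log_pos (by linarith)) hl
  have hcne : c ≠ 0 := ne_of_gt hcpos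
  -- the summand as a function of r and k
  set F : ℕ → ℕ → ℝ := fun r k =>
    ((-1 : ℝ) ^ r * (Nat.factorial n : ℝ)) /
        ((Nat.factorial r : ℝ) * (Nat.factorial (n - 2 * r) : ℝ)) *
      c ^ ((r : ℤ) - (n : ℤ)) * y ^ r *
      ((Nat.factorial (n - 2 * r) : ℝ) /
          ((Nat.factorial (n - 2 * r - 2 * k) : ℝ) * (Nat.factorial k : ℝ)) *
        c ^ (n - 2 * r - k) * x ^ (n - 2 * r - 2 * k) * y ^ k) with hF
  have hRHS : (∑ r ∈ Finset.range (n / 2 + 1),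
        ((-1 : ℝ) ^ r * (Nat.factorial n : ℝ)) /
            ((Nat.factorial r : ℝ) * (Nat.factorial (n - 2 * r) : ℝ)) *
          c ^ ((r : ℤ) - (n : ℤ)) * y ^ r * dH l x y (n - 2 * r))
      = ∑ r ∈ Finset.range (n / 2 + 1), ∑ k ∈ Finset.range (n / 2 - r + 1), F r k := by
    apply Finset.sum_congr rfl
    intro r hr
    simp only [Finset.mem_range] at hr
    have hdiv : (n - 2 * r) / 2 = n / 2 - r := by omega
    rw [dH, hdiv, Finset.mul_sum]
  rw [hRHS, ← tri_sum (n / 2) F]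
  -- pointwise: F r (m - r) = C m * ((-1)^r * choose m r)
  have key : ∀ m ∈ Finset.range (n / 2 + 1),
      (∑ r ∈ Finset.range (m + 1), F r (m - r))
        = ((Nat.factorial n : ℝ) / ((Nat.factorial m : ℝ) * (Nat.factorial (n - 2 * m) : ℝ)) *
            c ^ (-(m : ℤ)) * x ^ (n - 2 * m) * y ^ m) *
          (if m = 0 then 1 else 0) := by
    intro m hm
    simp only [Finset.mem_range] at hm
    rw [← alt_sum_choose_real m, Finset.mul_sum]
    apply Finset.sum_congr rfl
    intro r hr
    simp only [Finset.mem_range] at hr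
    have hrm : r ≤ m := by omega
    have hmn : 2 * m ≤ n := by omega
    have e1 : n - 2 * r - 2 * (m - r) = n - 2 * m := by omega
    have e2 : n - 2 * r - (m - r) = n - r - m := by omega
    have e3 : y ^ r * y ^ (m - r) = y ^ m := by
      rw [← pow_add]; congr 1; omega
    have e4 : c ^ ((r : ℤ) - (n : ℤ)) * c ^ (n - 2 * r - (m - r)) = c ^ (-(m : ℤ)) := by
      rw [e2, ← zpow_natCast c (n - r - m), ← zpow_add₀ hcne]
      congr 1
      have : (↑(n - r - m) : ℤ) = (n : ℤ) - r - m := by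
        omega
      omega
    have hchoose : (m.choose r : ℝ)
        = (Nat.factorial m : ℝ) / ((Nat.factorial r : ℝ) * (Nat.factorial (m - r) : ℝ)) := by
      rw [Nat.choose_eq_factorial_div_factorial hrm]
      rw [Nat.cast_div]
      · push_cast; ring
      · exact Nat.factorial_mul_factorial_dvd_factorial hrm
      · positivity
    rw [hF]
    simp only [e1]
    have fac_ne : ∀ j : ℕ, (Nat.factorial j : ℝ) ≠ 0 := fun j => by positivity
    -- rearrange
    calc ((-1 : ℝ) ^ r * (Nat.factorial n : ℝ)) /
        ((Nat.factorial r : ℝ) * (Nat.factorial (n - 2 * r) : ℝ)) *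
      c ^ ((r : ℤ) - (n : ℤ)) * y ^ r *
      ((Nat.factorial (n - 2 * r) : ℝ) /
          ((Nat.factorial (n - 2 * m) : ℝ) * (Nat.factorial (m - r) : ℝ)) *
        c ^ (n - 2 * r - (m - r)) * x ^ (n - 2 * m) * y ^ (m - r))
        = ((-1 : ℝ) ^ r * ((Nat.factorial n : ℝ) /
            ((Nat.factorial r : ℝ) * (Nat.factorial (m - r) : ℝ) *
              (Nat.factorial (n - 2 * m) : ℝ)))) *
          (c ^ ((r : ℤ) - (n : ℤ)) * c ^ (n - 2 * r - (m - r))) * x ^ (n - 2 * m) *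
          (y ^ r * y ^ (m - r)) := by
          field_simp
      _ = (Nat.factorial n : ℝ) / ((Nat.factorial m : ℝ) * (Nat.factorial (n - 2 * m) : ℝ)) *
            c ^ (-(m : ℤ)) * x ^ (n - 2 * m) * y ^ m * ((-1 : ℝ) ^ r * (m.choose r : ℝ)) := by
          rw [e3, e4, hchoose]
          field_simp
  rw [Finset.sum_congr rfl key]
  simp only [mul_ite, mul_one, mul_zero]
  rw [Finset.sum_ite_eq' (Finset.range (n / 2 + 1)) 0]
  have hfne : ((Nat.factorial n : ℝ)) ≠ 0 := by positivity
  simp [div_self hfne]
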